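/- Let Q : ℝⁿ → S^m be differentiable and ψ(x) := ‖P(Q(x))‖_F², where P is the projection onto the PSD cone. Then ψ is differentiable and ∇ψ(x) = 2 ∇Q(x)* P(Q(x)), where ∇Q(x)* denotes the adjoint of the derivative of Q at x. -/

import Mathlib

open Matrix

attribute [local instance] Matrix.frobeniusSeminormedAddCommGroup
  Matrix.frobeniusNormedAddCommGroup Matrix.frobeniusNormedSpace

/-- The Jordan product `Y ∘ Z = (YZ + ZY)/2`. -/
noncomputable def jmul {m : ℕ} (Y Z : Matrix (Fin m) (Fin m) ℝ) : Matrix (Fin m) (Fin m) ℝ :=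
  (2⁻¹ : ℝ) • (Y * Z + Z * Y)

/-- The trace inner product `⟨Y, Z⟩ = tr (Y Z)`. -/
noncomputable def finner {m : ℕ} (Y Z : Matrix (Fin m) (Fin m) ℝ) : ℝ := (Y * Z).trace

/-- `P` is the nearest-point (Frobenius-norm) projection onto the cone of positive
semidefinite matrices, viewed on the space of real symmetric matrices. -/
def IsProjPSD {m : ℕ} (P : Matrix (Fin m) (Fin m) ℝ → Matrix (Fin m) (Fin m) ℝ) : Prop :=
  ∀ Z : Matrix (Fin m) (Fin m) ℝ, Z.IsSymm →
    (P Z).PosSemidef ∧ ∀ W : Matrix (Fin m) (Fin m) ℝ, W.PosSemidef → ‖Z - P Z‖ ≤ ‖Z - W‖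

namespace GradNormsqProj

variable {m : ℕ}

/-- The entrywise (Frobenius) inner product. -/
noncomputable def ip (A B : Matrix (Fin m) (Fin m) ℝ) : ℝ := ∑ i, ∑ j, A i j * B i j

lemma ip_comm (A B : Matrix (Fin m) (Fin m) ℝ) : ip A B = ip B A := by
  simp [ip, mul_comm]

lemma ip_add_left (A B C : Matrix (Fin m) (Fin m) ℝ) : ip (A + B) C = ip A C + ip B C := by
  simp [ip, Matrix.add_apply, add_mul, Finset.sum_add_distrib]

lemma ip_sub_left (A B C : Matrix (Fin m) (Fin m) ℝ) : ip (A - B) C = ip A C - ip B C := by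
  simp [ip, Matrix.sub_apply, sub_mul, Finset.sum_sub_distrib]

lemma ip_smul_left (t : ℝ) (A B : Matrix (Fin m) (Fin m) ℝ) : ip (t • A) B = t * ip A B := by
  simp [ip, Matrix.smul_apply, smul_eq_mul, Finset.mul_sum, mul_assoc]

lemma ip_neg_left (A B : Matrix (Fin m) (Fin m) ℝ) : ip (-A) B = - ip A B := by
  simp [ip, Matrix.neg_apply, Finset.sum_neg_distrib]

lemma ip_sub_right (A B C : Matrix (Fin m) (Fin m) ℝ) : ip A (B - C) = ip A B - ip A C := by
  rw [ip_comm, ip_sub_left, ip_comm B A, ip_comm C A]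

lemma ip_add_right (A B C : Matrix (Fin m) (Fin m) ℝ) : ip A (B + C) = ip A B + ip A C := by
  rw [ip_comm, ip_add_left, ip_comm B A, ip_comm C A]

lemma ip_smul_right (t : ℝ) (A B : Matrix (Fin m) (Fin m) ℝ) : ip A (t • B) = t * ip A B := by
  rw [ip_comm, ip_smul_left, ip_comm]

lemma ip_neg_right (A B : Matrix (Fin m) (Fin m) ℝ) : ip A (-B) = - ip A B := by
  rw [ip_comm, ip_neg_left, ip_comm]

lemma ip_zero_right (A : Matrix (Fin m) (Fin m) ℝ) : ip A 0 = 0 := by simp [ip]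

lemma ip_self_nonneg (A : Matrix (Fin m) (Fin m) ℝ) : 0 ≤ ip A A :=
  Finset.sum_nonneg fun _ _ => Finset.sum_nonneg fun _ _ => mul_self_nonneg _

lemma norm_sq_eq_ip (A : Matrix (Fin m) (Fin m) ℝ) : ‖A‖ ^ 2 = ip A A := by
  rw [Matrix.frobenius_norm_def]
  rw [← Real.rpow_natCast ((∑ i, ∑ j, ‖A i j‖ ^ (2 : ℝ)) ^ (1 / 2 : ℝ)) 2,
    ← Real.rpow_mul (by positivity)]
  norm_num
  simp [ip, Real.rpow_two, Real.norm_eq_abs, sq_abs, sq]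

lemma normsq_sub (A B : Matrix (Fin m) (Fin m) ℝ) :
    ‖A - B‖ ^ 2 = ‖A‖ ^ 2 - 2 * ip A B + ‖B‖ ^ 2 := by
  rw [norm_sq_eq_ip, norm_sq_eq_ip, norm_sq_eq_ip, ip_sub_left, ip_sub_right, ip_sub_right,
    ip_comm B A]
  ring

lemma normsq_sub_smul (U V : Matrix (Fin m) (Fin m) ℝ) (t : ℝ) :
    ‖U - t • V‖ ^ 2 = ‖U‖ ^ 2 - 2 * t * ip U V + t ^ 2 * ‖V‖ ^ 2 := by
  rw [normsq_sub, ip_smul_right, norm_sq_eq_ip (t • V), ip_smul_left, ip_smul_right,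
    norm_sq_eq_ip V]
  ring

lemma psd_zero : (0 : Matrix (Fin m) (Fin m) ℝ).PosSemidef := by
  constructor
  · simp [Matrix.IsHermitian]
  · intro x; simp

lemma psd_add {A B : Matrix (Fin m) (Fin m) ℝ} (hA : A.PosSemidef) (hB : B.PosSemidef) :
    (A + B).PosSemidef := by
  refine ⟨hA.1.add hB.1, fun x => ?_⟩
  have := add_nonneg (hA.2 x) (hB.2 x)
  simpa [Matrix.add_mulVec, dotProduct_add, mul_add, add_mul, Finsupp.sum_add] using this

lemma psd_smul {c : ℝ} (hc : 0 ≤ c) {A : Matrix (Fin m) (Fin m) ℝ} (hA : A.PosSemidef) :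
    (c • A).PosSemidef := by
  refine ⟨?_, fun x => ?_⟩
  · unfold Matrix.IsHermitian
    rw [Matrix.conjTranspose_smul, hA.1]
    simp
  · have := mul_nonneg hc (hA.2 x)
    convert this using 1
    rw [Finsupp.mul_sum]; refine Finsupp.sum_congr fun i _ => ?_
    rw [Finsupp.mul_sum]; refine Finsupp.sum_congr fun j _ => ?_
    simp only [Matrix.smul_apply, smul_eq_mul]; ring

variable {P : Matrix (Fin m) (Fin m) ℝ → Matrix (Fin m) (Fin m) ℝ}

lemma varineq (hP : IsProjPSD P) {Z W : Matrix (Fin m) (Fin m) ℝ} (hZ : Z.IsSymm)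
    (hW : W.PosSemidef) : ip (Z - P Z) (W - P Z) ≤ 0 := by
  set c := ip (Z - P Z) (W - P Z) with hc
  have hM : (0 : ℝ) ≤ ‖W - P Z‖ ^ 2 := by positivity
  have key : ∀ t : ℝ, 0 < t → t ≤ 1 → 2 * c ≤ t * ‖W - P Z‖ ^ 2 := by
    intro t ht ht1
    have hWt : (P Z + t • (W - P Z)).PosSemidef := by
      have h1 : P Z + t • (W - P Z) = (1 - t) • P Z + t • W := by module
      rw [h1]
      exact psd_add (psd_smul (by linarith) (hP Z hZ).1) (psd_smul ht.le hW)
    have hle := (hP Z hZ).2 _ hWt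
    have hsq : ‖Z - P Z‖ ^ 2 ≤ ‖Z - (P Z + t • (W - P Z))‖ ^ 2 :=
      pow_le_pow_left₀ (norm_nonneg _) hle 2
    have h2 : Z - (P Z + t • (W - P Z)) = (Z - P Z) - t • (W - P Z) := by module
    rw [h2, normsq_sub_smul] at hsq
    nlinarith
  by_contra hcpos
  push_neg at hcpos
  have h1 := key 1 one_pos le_rfl
  have hMpos : 0 < ‖W - P Z‖ ^ 2 := by nlinarith
  have h2 := key (c / ‖W - P Z‖ ^ 2) (by positivity)
    (by rw [div_le_one hMpos]; nlinarith)
  rw [div_mul_cancel₀ _ (ne_of_gt hMpos)] at h2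
  linarith

lemma orth (hP : IsProjPSD P) {Z : Matrix (Fin m) (Fin m) ℝ} (hZ : Z.IsSymm) :
    ip (Z - P Z) (P Z) = 0 := by
  have h0 := varineq hP hZ (psd_zero (m := m))
  have h1 := varineq hP hZ (psd_add (hP Z hZ).1 (hP Z hZ).1)
  rw [ip_sub_right, ip_zero_right] at h0
  rw [ip_sub_right, ip_add_right] at h1
  linarith

lemma normPsq (hP : IsProjPSD P) {Z : Matrix (Fin m) (Fin m) ℝ} (hZ : Z.IsSymm) :
    ‖P Z‖ ^ 2 = ip Z (P Z) := by
  have h := orth hP hZ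
  rw [ip_sub_left] at h
  rw [norm_sq_eq_ip]
  linarith

lemma lower (hP : IsProjPSD P) {Y Z : Matrix (Fin m) (Fin m) ℝ} (hY : Y.IsSymm)
    (hZ : Z.IsSymm) : 2 * ip (Y - Z) (P Z) ≤ ‖P Y‖ ^ 2 - ‖P Z‖ ^ 2 := by
  have hmin := (hP Y hY).2 (P Z) (hP Z hZ).1
  have hsq : ‖Y - P Y‖ ^ 2 ≤ ‖Y - P Z‖ ^ 2 := pow_le_pow_left₀ (norm_nonneg _) hmin 2
  rw [normsq_sub, normsq_sub] at hsq
  have hPY := normPsq hP hY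
  have hPZ := normPsq hP hZ
  have hsplit : ip (Y - Z) (P Z) = ip Y (P Z) - ip Z (P Z) := ip_sub_left _ _ _
  linarith

lemma sandwich_upper (hP : IsProjPSD P) {Y Z : Matrix (Fin m) (Fin m) ℝ} (hY : Y.IsSymm)
    (hZ : Z.IsSymm) :
    ‖P Y‖ ^ 2 - ‖P Z‖ ^ 2 - 2 * ip (Y - Z) (P Z) ≤ 2 * ‖Y - Z‖ ^ 2 := by
  have hup := lower hP hZ hY
  have hZY : ip (Z - Y) (P Y) = - ip (Y - Z) (P Y) := by
    rw [show Z - Y = -(Y - Z) by abel, ip_neg_left]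
  have h1 := varineq hP hY (hP Z hZ).1
  have h2 := varineq hP hZ (hP Y hY).1
  have hdecomp : Y - Z = (Y - P Y) - (Z - P Z) + (P Y - P Z) := by abel
  have hfirm : ‖P Y - P Z‖ ^ 2 ≤ ip (Y - Z) (P Y - P Z) := by
    have hd : ip (Y - Z) (P Y - P Z) =
        ip (Y - P Y) (P Y - P Z) - ip (Z - P Z) (P Y - P Z)
          + ip (P Y - P Z) (P Y - P Z) := by
      rw [hdecomp, ip_add_left, ip_sub_left]
    have h1' : ip (Y - P Y) (P Y - P Z) = - ip (Y - P Y) (P Z - P Y) := by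
      rw [show P Y - P Z = -(P Z - P Y) by abel, ip_neg_right]
    rw [norm_sq_eq_ip, hd]
    linarith
  have hsq : (0 : ℝ) ≤ ‖(Y - Z) - (P Y - P Z)‖ ^ 2 := by positivity
  rw [normsq_sub] at hsq
  have hsplit : ip (Y - Z) (P Y - P Z) = ip (Y - Z) (P Y) - ip (Y - Z) (P Z) :=
    ip_sub_right _ _ _
  linarith

/-- `ip · B` as a continuous linear map. -/
noncomputable def ipCLM (B : Matrix (Fin m) (Fin m) ℝ) :
    Matrix (Fin m) (Fin m) ℝ →L[ℝ] ℝ :=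
  LinearMap.toContinuousLinearMap
    { toFun := fun A => ip A B
      map_add' := fun A C => ip_add_left A C B
      map_smul' := fun t A => ip_smul_left t A B }

@[simp] lemma ipCLM_apply (B A : Matrix (Fin m) (Fin m) ℝ) : ipCLM B A = ip A B := rfl

lemma finner_eq_ip (A S : Matrix (Fin m) (Fin m) ℝ) (hS : S.IsSymm) :
    finner A S = ip A S := by
  unfold finner ip
  rw [Matrix.trace]
  refine Finset.sum_congr rfl fun i _ => ?_
  rw [Matrix.diag_apply, Matrix.mul_apply]
  exact Finset.sum_congr rfl fun j _ => by rw [hS.apply i j]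

end GradNormsqProj

open GradNormsqProj Asymptotics Filter

/-- If `Q` is differentiable and `ψ(x) = ‖P(Q(x))‖_F²`, then `ψ` is differentiable and
`∇ψ(x) = 2 ∇Q(x)* P(Q(x))`, i.e. `Dψ(x)v = 2⟨∇Q(x)v, P(Q(x))⟩` for every direction `v`. -/
theorem grad_normsq_proj {n m : ℕ}
    (P : Matrix (Fin m) (Fin m) ℝ → Matrix (Fin m) (Fin m) ℝ) (hP : IsProjPSD P)
    (Q : (Fin n → ℝ) → Matrix (Fin m) (Fin m) ℝ) (hQsymm : ∀ x, (Q x).IsSymm)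
    (hQ : Differentiable ℝ Q) :
    Differentiable ℝ (fun x => ‖P (Q x)‖ ^ 2) ∧
      ∀ (x : Fin n → ℝ) (v : Fin n → ℝ),
        fderiv ℝ (fun x => ‖P (Q x)‖ ^ 2) x v = 2 * finner (fderiv ℝ Q x v) (P (Q x)) := by
  have hfd : ∀ x : Fin n → ℝ, HasFDerivAt (fun x => ‖P (Q x)‖ ^ 2)
      ((2 : ℝ) • ((ipCLM (P (Q x))).comp (fderiv ℝ Q x))) x := by
    intro x
    have hD : HasFDerivAt Q (fderiv ℝ Q x) x := (hQ x).hasFDerivAt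
    refine HasFDerivAt.of_isLittleO ?_
    have hsum : ∀ y : Fin n → ℝ,
        ‖P (Q y)‖ ^ 2 - ‖P (Q x)‖ ^ 2
            - ((2 : ℝ) • ((ipCLM (P (Q x))).comp (fderiv ℝ Q x))) (y - x)
        = (‖P (Q y)‖ ^ 2 - ‖P (Q x)‖ ^ 2 - 2 * ip (Q y - Q x) (P (Q x)))
          + 2 * ip (Q y - Q x - fderiv ℝ Q x (y - x)) (P (Q x)) := by
      intro y
      simp only [ContinuousLinearMap.smul_apply, ContinuousLinearMap.comp_apply, ipCLM_apply,
        smul_eq_mul, ip_sub_left]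
      ring
    have e1 : (fun y => ‖P (Q y)‖ ^ 2 - ‖P (Q x)‖ ^ 2 - 2 * ip (Q y - Q x) (P (Q x)))
        =o[nhds x] fun y => y - x := by
      have h1 : (fun y => Q y - Q x) =O[nhds x] fun y => y - x := hD.isBigO_sub
      have h2 : (fun y => Q y - Q x) =o[nhds x] (fun _ => (1 : ℝ)) := by
        rw [Asymptotics.isLittleO_one_iff]
        have ht : Tendsto Q (nhds x) (nhds (Q x)) := (hQ x).continuousAt
        have := ht.sub_const (Q x); rw [sub_self] at this; exact this
      have h3 := h1.norm_norm.mul_isLittleO h2.norm_left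
      have h4 : (fun y => ‖Q y - Q x‖ * ‖Q y - Q x‖) =o[nhds x] fun y => ‖y - x‖ := by
        simpa using h3
      have h5 : (fun y => ‖Q y - Q x‖ * ‖Q y - Q x‖) =o[nhds x] fun y => y - x :=
        Asymptotics.isLittleO_norm_right.mp h4
      refine (Asymptotics.IsBigO.of_bound 2 ?_).trans_isLittleO h5
      filter_upwards with y
      have hlow := lower hP (hQsymm y) (hQsymm x)
      have hupp := sandwich_upper hP (hQsymm y) (hQsymm x)
      rw [Real.norm_eq_abs, Real.norm_eq_abs, abs_of_nonneg (by linarith),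
        abs_of_nonneg (mul_self_nonneg _)]
      calc ‖P (Q y)‖ ^ 2 - ‖P (Q x)‖ ^ 2 - 2 * ip (Q y - Q x) (P (Q x))
          ≤ 2 * ‖Q y - Q x‖ ^ 2 := hupp
        _ = 2 * (‖Q y - Q x‖ * ‖Q y - Q x‖) := by ring
    have e2 : (fun y => 2 * ip (Q y - Q x - fderiv ℝ Q x (y - x)) (P (Q x)))
        =o[nhds x] fun y => y - x := by
      have hR : (fun y => Q y - Q x - fderiv ℝ Q x (y - x)) =o[nhds x] fun y => y - x :=
        hD.isLittleO
      have hcomp : (fun y => ip (Q y - Q x - fderiv ℝ Q x (y - x)) (P (Q x)))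
          =O[nhds x] (fun y => Q y - Q x - fderiv ℝ Q x (y - x)) :=
        (ipCLM (P (Q x))).isBigO_comp _ _
      exact (hcomp.trans_isLittleO hR).const_mul_left 2
    have := e1.add e2
    refine this.congr' ?_ EventuallyEq.rfl
    exact Filter.Eventually.of_forall fun y => (hsum y).symm
  refine ⟨fun x => (hfd x).differentiableAt, fun x v => ?_⟩
  rw [(hfd x).fderiv]
  have hsym : (P (Q x)).IsSymm := by
    have h : (P (Q x))ᴴ = P (Q x) := (hP (Q x) (hQsymm x)).1.1
    rw [Matrix.conjTranspose_eq_transpose_of_trivial] at h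
    exact h
  rw [finner_eq_ip _ _ hsym]
  simp [ipCLM_apply]
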